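/- Orderly Queues Relation: let P₁, P₂, P₃ be non-collinear points of ℝ² with dist(P₃,P₁) = dist(P₃,P₂), and define P_n for n ≥ 4 recursively as the circumcenter of P_{n−1}, P_{n−2}, P_{n−3}, assuming that each consecutive triple P_{n−3}, P_{n−2}, P_{n−1} is non-collinear so that the recursion is well defined. Then there exists a point P_∞ ∈ ℝ² such that: (1) for each r ∈ {1,2,3,4}, the set {P_∞} ∪ {P_{r+4k} : k ∈ ℕ} is collinear (all the points P_r, P_{r+4}, P_{r+8}, … lie on a single line through P_∞); and (2) for every n ≥ 1 the vectors P_n − P_∞ and P_{n+2} − P_∞ are perpendicular (their inner product is zero), so in particular the lines containing {P_{1+4k}} and {P_{3+4k}} are perpendicular, as are the lines containing {P_{2+4k}} and {P_{4+4k}}. -/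

import Mathlib

open Real

open Complex in
private lemma perp_aux' {z w a b : ℂ} (h1 : normSq (z - a) = normSq (z - b))
    (h2 : normSq (w - a) = normSq (w - b)) :
    (z - w).re * (b - a).re + (z - w).im * (b - a).im = 0 := by
  simp only [Complex.normSq_apply, Complex.sub_re, Complex.sub_im] at h1 h2 ⊢
  nlinarith [h1, h2]

open Complex in
private lemma perp_decomp' {u v : ℂ} (hu : u ≠ 0)
    (h : u.re * v.re + u.im * v.im = 0) : ∃ s : ℝ, v = s * (I * u) := by
  have h2 : (v / u).re = 0 := by
    rw [div_re, ← add_div, show v.re * u.re + v.im * u.im = 0 by linarith, zero_div]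
  obtain ⟨s, hs⟩ : ∃ s : ℝ, v / u = (s : ℂ) * I := by
    refine ⟨(v / u).im, ?_⟩
    rw [← re_add_im (v / u), h2]
    simp
  refine ⟨s, ?_⟩
  calc v = (v / u) * u := (div_mul_cancel₀ v hu).symm
    _ = (s : ℂ) * I * u := by rw [hs]
    _ = (s : ℂ) * (I * u) := by ring

open Complex in
private lemma cuniq {z w a b c : ℂ} (hcol : ¬ Collinear ℝ ({a, b, c} : Set ℂ))
    (hz1 : normSq (z - a) = normSq (z - b)) (hz2 : normSq (z - a) = normSq (z - c))
    (hw1 : normSq (w - a) = normSq (w - b)) (hw2 : normSq (w - a) = normSq (w - c)) :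
    z = w := by
  by_contra hzw
  have hu : z - w ≠ 0 := sub_ne_zero.mpr hzw
  obtain ⟨s, hs⟩ := perp_decomp' hu (perp_aux' hz1 hw1)
  obtain ⟨s', hs'⟩ := perp_decomp' hu (perp_aux' hz2 hw2)
  apply hcol
  rw [collinear_iff_of_mem (Set.mem_insert a _)]
  refine ⟨I * (z - w), ?_⟩
  rintro p (rfl | rfl | rfl)
  · exact ⟨0, by simp⟩
  · exact ⟨s, by rw [show p = a + (p - a) by ring, hs]; simp [Complex.real_smul]; ring⟩
  · exact ⟨s', by rw [show p = a + (p - a) by ring, hs']; simp [Complex.real_smul]; ring⟩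

open Complex in
private lemma cbase {A B C D E : ℂ} (hAB : A ≠ B)
    (h1 : normSq (C - A) = normSq (C - B))
    (h2 : normSq (D - A) = normSq (D - B))
    (h3 : normSq (D - C) = normSq (D - A))
    (h4 : normSq (E - D) = normSq (E - C))
    (h5 : normSq (E - D) = normSq (E - B)) :
    ∃ t : ℝ, C - D = ((t : ℂ) * I) * (A - B) ∧ E - C = ((t : ℂ) * I) * (C - A) := by
  set M : ℂ := (A + B) / 2 with hM
  set u : ℂ := B - A with hu
  have hu0 : u ≠ 0 := by rw [hu, sub_ne_zero]; exact fun h => hAB h.symm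
  have hnsu : normSq u ≠ 0 := by rwa [ne_eq, normSq_eq_zero]
  have hA' : A = M - u / 2 := by rw [hM, hu]; ring
  have hB' : B = M + u / 2 := by rw [hM, hu]; ring
  have hMAB : normSq (M - A) = normSq (M - B) := by
    rw [show M - B = -(M - A) by rw [hM]; ring, normSq_neg]
  obtain ⟨p, hC⟩ : ∃ p : ℝ, C - M = (p : ℂ) * (I * u) := by
    refine perp_decomp' hu0 ?_
    have := perp_aux' h1 hMAB
    rw [← hu] at this
    linarith
  obtain ⟨q, hD⟩ : ∃ q : ℝ, D - M = (q : ℂ) * (I * u) := by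
    refine perp_decomp' hu0 ?_
    have := perp_aux' h2 hMAB
    rw [← hu] at this
    linarith
  obtain ⟨x, y, hE⟩ : ∃ x y : ℝ, E - M = ((x : ℂ) + (y : ℂ) * I) * u := by
    refine ⟨((E - M) / u).re, ((E - M) / u).im, ?_⟩
    rw [re_add_im ((E - M) / u), div_mul_cancel₀ _ hu0]
  have hR1 : (q - p) ^ 2 = 1 / 4 + q ^ 2 := by
    have e1 : D - C = (((0 : ℝ) : ℂ) + ((q - p : ℝ) : ℂ) * I) * u := by
      push_cast; linear_combination hD - hC
    have e2 : D - A = (((1 / 2 : ℝ) : ℂ) + ((q : ℝ) : ℂ) * I) * u := by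
      push_cast; linear_combination hD - hA' + (0 : ℂ) * hB'
    rw [e1, e2, normSq_mul, normSq_mul, normSq_add_mul_I, normSq_add_mul_I] at h3
    have := mul_right_cancel₀ hnsu h3
    nlinarith [this]
  have hR2 : x ^ 2 + (y - q) ^ 2 = x ^ 2 + (y - p) ^ 2 := by
    have e1 : E - D = (((x : ℝ) : ℂ) + ((y - q : ℝ) : ℂ) * I) * u := by
      push_cast; linear_combination hE - hD
    have e2 : E - C = (((x : ℝ) : ℂ) + ((y - p : ℝ) : ℂ) * I) * u := by
      push_cast; linear_combination hE - hC
    rw [e1, e2, normSq_mul, normSq_mul, normSq_add_mul_I, normSq_add_mul_I] at h4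
    exact mul_right_cancel₀ hnsu h4
  have hR3 : x ^ 2 + (y - q) ^ 2 = (x - 1 / 2) ^ 2 + y ^ 2 := by
    have e1 : E - D = (((x : ℝ) : ℂ) + ((y - q : ℝ) : ℂ) * I) * u := by
      push_cast; linear_combination hE - hD
    have e2 : E - B = (((x - 1 / 2 : ℝ) : ℂ) + ((y : ℝ) : ℂ) * I) * u := by
      push_cast; linear_combination hE - hB'
    rw [e1, e2, normSq_mul, normSq_mul, normSq_add_mul_I, normSq_add_mul_I] at h5
    exact mul_right_cancel₀ hnsu h5
  have hpq : p ≠ q := by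
    intro h; rw [h] at hR1; nlinarith [hR1]
  have hy : y = (p + q) / 2 := by
    have h6 : (p - q) * ((p + q) - 2 * y) = 0 := by linear_combination (-1 : ℝ) * hR2
    rcases mul_eq_zero.mp h6 with h7 | h7
    · exact absurd (by linarith : p = q) hpq
    · linarith
  have hx0 : x = 1 / 4 + p * q := by linear_combination hR3 + (2 * q) * hy
  have hx : x = -p * (q - p) := by linear_combination hx0 - hR1
  refine ⟨q - p, ?_, ?_⟩
  · push_cast
    linear_combination hC - hD - ((q : ℂ) - (p : ℂ)) * I * hA' + ((q : ℂ) - (p : ℂ)) * I * hB'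
  · have hxC : (x : ℂ) = -(p : ℂ) * ((q : ℂ) - (p : ℂ)) := by
      exact_mod_cast congrArg (Complex.ofReal) hx
    have hyC : (y : ℂ) = ((p : ℂ) + (q : ℂ)) / 2 := by
      exact_mod_cast congrArg (Complex.ofReal) hy
    push_cast
    have hI : (I : ℂ) ^ 2 = -1 := I_sq
    linear_combination hE - hC - ((q : ℂ) - (p : ℂ)) * I * hC + ((q : ℂ) - (p : ℂ)) * I * hA'
      + u * hxC + u * I * hyC + ((B - A) * ((p : ℂ) ^ 2 - (p : ℂ) * (q : ℂ))) * hI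

open Complex in
private lemma cmap (e : ℂ ≃ₗᵢ[ℝ] EuclideanSpace ℝ (Fin 2)) {a b c : ℂ}
    (h : Collinear ℝ ({a, b, c} : Set ℂ)) :
    Collinear ℝ ({e a, e b, e c} : Set (EuclideanSpace ℝ (Fin 2))) := by
  rw [collinear_iff_of_mem (Set.mem_insert a _)] at h
  obtain ⟨v, hv⟩ := h
  rw [collinear_iff_of_mem (Set.mem_insert (e a) _)]
  refine ⟨e v, ?_⟩
  rintro x (rfl | rfl | rfl)
  · exact ⟨0, by simp⟩
  · obtain ⟨r, hr⟩ := hv b (by simp)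
    refine ⟨r, ?_⟩
    rw [hr, vadd_eq_add, vadd_eq_add, map_add, map_smul]
  · obtain ⟨r, hr⟩ := hv c (by simp)
    refine ⟨r, ?_⟩
    rw [hr, vadd_eq_add, vadd_eq_add, map_add, map_smul]


private lemma nsq_mul_congr {a X Y : ℂ} (h : Complex.normSq X = Complex.normSq Y) :
    Complex.normSq (a * X) = Complex.normSq (a * Y) := by
  rw [Complex.normSq_mul, Complex.normSq_mul, h]

theorem orderly_queues_relation (P : ℕ → EuclideanSpace ℝ (Fin 2))
    (h123 : ¬ Collinear ℝ ({P 1, P 2, P 3} : Set (EuclideanSpace ℝ (Fin 2))))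
    (hiso : dist (P 3) (P 1) = dist (P 3) (P 2))
    (hnc : ∀ n, 4 ≤ n →
      ¬ Collinear ℝ ({P (n - 3), P (n - 2), P (n - 1)} : Set (EuclideanSpace ℝ (Fin 2))))
    (hrec : ∀ n, 4 ≤ n →
      dist (P n) (P (n - 1)) = dist (P n) (P (n - 2)) ∧
      dist (P n) (P (n - 1)) = dist (P n) (P (n - 3))) :
    ∃ Pinf : EuclideanSpace ℝ (Fin 2),
      (∀ r, 1 ≤ r → r ≤ 4 →
        Collinear ℝ (insert Pinf {x | ∃ k : ℕ, x = P (r + 4 * k)})) ∧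
      (∀ n, 1 ≤ n → (inner ℝ (P n - Pinf) (P (n + 2) - Pinf) : ℝ) = 0) := by
  classical
  set e : ℂ ≃ₗᵢ[ℝ] EuclideanSpace ℝ (Fin 2) := Complex.orthonormalBasisOneI.repr with he
  set Q : ℕ → ℂ := fun n => e.symm (P n) with hQdef
  have hQP : ∀ n, e (Q n) = P n := fun n => e.apply_symm_apply (P n)
  -- transfer the distance hypotheses
  have hns : ∀ m n a b : ℕ, dist (P m) (P n) = dist (P a) (P b) →
      Complex.normSq (Q m - Q n) = Complex.normSq (Q a - Q b) := by
    intro m n a b h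
    have hd : dist (Q m) (Q n) = dist (Q a) (Q b) := by
      simp only [hQdef]
      rw [e.symm.dist_map, e.symm.dist_map, h]
    calc Complex.normSq (Q m - Q n) = dist (Q m) (Q n) ^ 2 := by
          rw [Complex.dist_eq, Complex.sq_norm]
      _ = dist (Q a) (Q b) ^ 2 := by rw [hd]
      _ = Complex.normSq (Q a - Q b) := by rw [Complex.dist_eq, Complex.sq_norm]
  -- transfer the non-collinearity hypotheses
  have hQnc : ∀ k : ℕ, ¬ Collinear ℝ ({Q (k + 1), Q (k + 2), Q (k + 3)} : Set ℂ) := by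
    intro k hc
    apply hnc (k + 4) (by omega)
    have h1 : k + 4 - 3 = k + 1 := by omega
    have h2 : k + 4 - 2 = k + 2 := by omega
    have h3 : k + 4 - 1 = k + 3 := by omega
    rw [h1, h2, h3, ← hQP (k + 1), ← hQP (k + 2), ← hQP (k + 3)]
    exact cmap e hc
  -- transfer the recursion hypotheses
  have hQrec : ∀ k : ℕ,
      Complex.normSq (Q (k + 4) - Q (k + 3)) = Complex.normSq (Q (k + 4) - Q (k + 2)) ∧
      Complex.normSq (Q (k + 4) - Q (k + 3)) = Complex.normSq (Q (k + 4) - Q (k + 1)) := by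
    intro k
    have h := hrec (k + 4) (by omega)
    have h1 : k + 4 - 3 = k + 1 := by omega
    have h2 : k + 4 - 2 = k + 2 := by omega
    have h3 : k + 4 - 1 = k + 3 := by omega
    rw [h1, h2, h3] at h
    exact ⟨hns _ _ _ _ h.1, hns _ _ _ _ h.2⟩
  -- the base similarity
  have hQ12 : Q 1 ≠ Q 2 := by
    intro h
    apply hQnc 0
    rw [show (0:ℕ) + 1 = 1 from rfl, show (0:ℕ) + 2 = 2 from rfl, show (0:ℕ) + 3 = 3 from rfl, h]
    have : ({Q 2, Q 2, Q 3} : Set ℂ) = {Q 2, Q 3} := by simp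
    rw [this]
    exact collinear_pair ℝ _ _
  obtain ⟨t, ht1, ht2⟩ := cbase hQ12
    (hns 3 1 3 2 hiso)
    ((hQrec 0).2.symm.trans (hQrec 0).1)
    (hQrec 0).2
    (hQrec 1).1
    (hQrec 1).2
  have ht1' : Q 3 - Q 4 = ((t : ℂ) * Complex.I) * (Q 1 - Q 2) := ht1
  have ht2' : Q 5 - Q 3 = ((t : ℂ) * Complex.I) * (Q 3 - Q 1) := ht2
  obtain ⟨c, hcdef⟩ : ∃ c : ℂ, c = (t : ℂ) * Complex.I := ⟨_, rfl⟩
  rw [← hcdef] at ht1' ht2'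
  have hc1 : (1 : ℂ) - c ≠ 0 := by
    intro h
    rw [hcdef] at h
    have := congrArg Complex.re h
    simp at this
  obtain ⟨zc, hzdef⟩ : ∃ z : ℂ, z = (Q 3 - c * Q 1) / (1 - c) := ⟨_, rfl⟩
  have H1 : Q 3 - zc = c * (Q 1 - zc) := by
    rw [hzdef]; field_simp; ring
  have H2 : Q 4 - zc = c * (Q 2 - zc) := by linear_combination H1 - ht1'
  have H3 : Q 5 - zc = c * (Q 3 - zc) := by linear_combination H1 + ht2'
  -- the key induction
  have key : ∀ k : ℕ, (Q (k + 3) - zc = c * (Q (k + 1) - zc)) ∧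
      (Q (k + 4) - zc = c * (Q (k + 2) - zc)) ∧
      (Q (k + 5) - zc = c * (Q (k + 3) - zc)) := by
    intro k
    induction k with
    | zero => exact ⟨H1, H2, H3⟩
    | succ n ih =>
      obtain ⟨ha, hb, hcc⟩ := ih
      refine ⟨hb, hcc, ?_⟩
      -- goal : Q (n + 6) - zc = c * (Q (n + 4) - zc)
      set w : ℂ := zc + c * (Q (n + 4) - zc) with hwdef
      have hw5 : w - Q (n + 5) = c * (Q (n + 4) - Q (n + 3)) := by
        rw [hwdef]; linear_combination -hcc
      have hw4 : w - Q (n + 4) = c * (Q (n + 4) - Q (n + 2)) := by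
        rw [hwdef]; linear_combination -hb
      have hw3 : w - Q (n + 3) = c * (Q (n + 4) - Q (n + 1)) := by
        rw [hwdef]; linear_combination -ha
      have he' := hQrec n
      have hd := hQrec (n + 2)
      have hwa : Complex.normSq (w - Q (n + 3)) = Complex.normSq (w - Q (n + 4)) := by
        rw [hw3, hw4]
        exact nsq_mul_congr (he'.2.symm.trans he'.1)
      have hwb : Complex.normSq (w - Q (n + 3)) = Complex.normSq (w - Q (n + 5)) := by
        rw [hw3, hw5]
        exact nsq_mul_congr he'.2.symm
      have hza : Complex.normSq (Q (n + 6) - Q (n + 3)) = Complex.normSq (Q (n + 6) - Q (n + 4)) := by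
        have hd1 := hd.1
        have hd2 := hd.2
        rw [show n + 2 + 4 = n + 6 from by omega, show n + 2 + 3 = n + 5 from by omega,
          show n + 2 + 2 = n + 4 from by omega] at hd1
        rw [show n + 2 + 4 = n + 6 from by omega, show n + 2 + 3 = n + 5 from by omega,
          show n + 2 + 1 = n + 3 from by omega] at hd2
        rw [← hd2, hd1]
      have hzb : Complex.normSq (Q (n + 6) - Q (n + 3)) = Complex.normSq (Q (n + 6) - Q (n + 5)) := by
        have hd2 := hd.2
        rw [show n + 2 + 4 = n + 6 from by omega, show n + 2 + 3 = n + 5 from by omega,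
          show n + 2 + 1 = n + 3 from by omega] at hd2
        exact hd2.symm
      have hQeq : Q (n + 6) = w :=
        cuniq (hQnc (n + 2)) hza hzb hwa hwb
      rw [hQeq, hwdef]; ring
  have H : ∀ n : ℕ, 1 ≤ n → Q (n + 2) - zc = c * (Q n - zc) := by
    intro n hn
    obtain ⟨k, rfl⟩ : ∃ k, n = k + 1 := ⟨n - 1, by omega⟩
    exact (key k).1
  -- transfer back
  refine ⟨e zc, ?_, ?_⟩
  · -- collinearity
    intro r hr1 hr4
    rw [collinear_iff_of_mem (Set.mem_insert (e zc) _)]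
    refine ⟨P r - e zc, ?_⟩
    rintro x (rfl | ⟨k, rfl⟩)
    · exact ⟨0, by simp⟩
    · refine ⟨(-(t ^ 2)) ^ k, ?_⟩
      have hfour : ∀ m : ℕ, 1 ≤ m → Q (m + 4) - zc = -((t : ℂ) ^ 2) * (Q m - zc) := by
        intro m hm
        have hstep1 := H (m + 2) (by omega)
        have hstep2 := H m hm
        rw [show m + 2 + 2 = m + 4 from by omega] at hstep1
        rw [hcdef] at hstep1 hstep2
        have hI : (Complex.I : ℂ) ^ 2 = -1 := Complex.I_sq
        linear_combination hstep1 + ((t : ℂ) * Complex.I) * hstep2 +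
          ((t : ℂ) ^ 2 * (Q m - zc)) * hI
      have hQk : Q (r + 4 * k) - zc = (((-(t ^ 2)) ^ k : ℝ) : ℂ) * (Q r - zc) := by
        induction k with
        | zero => simp
        | succ j ih =>
          rw [show r + 4 * (j + 1) = (r + 4 * j) + 4 from by omega,
            hfour (r + 4 * j) (by omega), ih]
          push_cast
          ring
      have hsub : P (r + 4 * k) - e zc = ((-(t ^ 2)) ^ k : ℝ) • (P r - e zc) := by
        rw [← hQP (r + 4 * k), ← hQP r, ← map_sub, ← map_sub, hQk, ← Complex.real_smul,
          map_smul]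
      calc P (r + 4 * k) = (P (r + 4 * k) - e zc) + e zc := by abel
        _ = (-(t ^ 2)) ^ k • (P r - e zc) +ᵥ e zc := by rw [hsub, vadd_eq_add]
  · -- perpendicularity
    intro n hn
    rw [← hQP n, ← hQP (n + 2), ← map_sub, ← map_sub, e.inner_map_map, Complex.inner,
      H n hn, hcdef]
    obtain ⟨v, hv⟩ : ∃ v : ℂ, v = Q n - zc := ⟨_, rfl⟩
    rw [← hv]
    simp only [Complex.mul_re, Complex.mul_im, Complex.conj_re, Complex.conj_im,
      Complex.I_re, Complex.I_im, Complex.ofReal_re, Complex.ofReal_im]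
    ring
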